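/- Let a(n) be the number of even Motzkin paths and b(n) the number of odd Motzkin paths of length n. Then a and b satisfy, for n ≥ 0: a(n+1) = a(n) + 2·Σ_{k=0}^{n-1} a(k)·b(n-1-k) and b(n+1) = b(n) + Σ_{k=0}^{n-1} (a(k)·a(n-1-k) + b(k)·b(n-1-k)), with a(0)=1, b(0)=0. -/

import Mathlib

inductive MStep where
  | U : MStep
  | D : MStep
  | H : MStep
deriving DecidableEq

/-- A word in {U,D,H} is a Motzkin path if #U = #D and no prefix has more D's than U's. -/
def IsMotzkin (w : List MStep) : Prop :=
  w.count MStep.U = w.count MStep.D ∧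
  ∀ p : List MStep, p <+: w → p.count MStep.D ≤ p.count MStep.U

/-- Number of Motzkin paths of length n (the n-th Motzkin number). -/
noncomputable def motzkinNum (n : ℕ) : ℕ :=
  Nat.card {w : List MStep // w.length = n ∧ IsMotzkin w}

/-- Number of Motzkin paths of length n with an even number of U steps. -/
noncomputable def evenMotzkin (n : ℕ) : ℕ :=
  Nat.card {w : List MStep // w.length = n ∧ IsMotzkin w ∧ Even (w.count MStep.U)}

/-- Number of Motzkin paths of length n with an odd number of U steps. -/
noncomputable def oddMotzkin (n : ℕ) : ℕ :=
  Nat.card {w : List MStep // w.length = n ∧ IsMotzkin w ∧ Odd (w.count MStep.U)}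

/-- The shadow of the n-th Motzkin number: s(n) = a(n) - b(n). -/
noncomputable def shadow (n : ℕ) : ℤ :=
  (evenMotzkin n : ℤ) - (oddMotzkin n : ℤ)

namespace MotzkinAux
open MStep

lemma prefix_append_cases {p l₁ l₂ : List MStep} (h : p <+: l₁ ++ l₂) :
    p <+: l₁ ∨ ∃ q, p = l₁ ++ q ∧ q <+: l₂ := by
  rcases le_or_gt p.length l₁.length with hl | hl
  · exact Or.inl (List.prefix_of_prefix_length_le h (l₁.prefix_append l₂) hl)
  · right
    have h₁ : l₁ <+: p := List.prefix_of_prefix_length_le (l₁.prefix_append l₂) h hl.le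
    obtain ⟨q, rfl⟩ := h₁
    refine ⟨q, rfl, ?_⟩
    obtain ⟨r, hr⟩ := h
    exact ⟨r, by simpa using hr⟩

lemma isMotzkin_nil : IsMotzkin [] := by
  constructor
  · rfl
  · intro p hp
    simp [List.prefix_nil.mp hp]

lemma isMotzkin_cons_H {w : List MStep} : IsMotzkin (H :: w) ↔ IsMotzkin w := by
  constructor
  · rintro ⟨h1, h2⟩
    refine ⟨by simpa [List.count_cons] using h1, fun p hp => ?_⟩
    have := h2 (H :: p) (by simpa using hp)
    simpa [List.count_cons] using this
  · rintro ⟨h1, h2⟩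
    refine ⟨by simpa [List.count_cons] using h1, fun p hp => ?_⟩
    rcases List.prefix_cons_iff.mp hp with rfl | ⟨t, rfl, ht⟩
    · simp
    · simpa [List.count_cons] using h2 t ht

lemma not_isMotzkin_cons_D {w : List MStep} : ¬ IsMotzkin (D :: w) := by
  rintro ⟨-, h2⟩
  have := h2 [D] ⟨w, rfl⟩
  simp [List.count_cons] at this

lemma isMotzkin_UD {w1 w2 : List MStep} (h1 : IsMotzkin w1) (h2 : IsMotzkin w2) :
    IsMotzkin (U :: w1 ++ D :: w2) := by
  obtain ⟨b1, p1⟩ := h1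
  obtain ⟨b2, p2⟩ := h2
  constructor
  · simp only [List.cons_append, List.count_cons, List.count_append]
    simp
    omega
  · intro p hp
    rcases List.prefix_cons_iff.mp (by simpa using hp) with rfl | ⟨t, rfl, ht⟩
    · simp
    · rcases prefix_append_cases ht with ht1 | ⟨q, rfl, hq⟩
      · have := p1 t ht1
        simp only [List.count_cons]
        simp
        omega
      · rcases List.prefix_cons_iff.mp hq with rfl | ⟨r, rfl, hr⟩
        · have := p1 w1 List.prefix_rfl
          simp only [List.count_cons, List.count_append]
          simp
          omega
        · have := p2 r hr
          have := p1 w1 List.prefix_rfl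
          simp only [List.count_cons, List.count_append]
          simp
          omega

end MotzkinAux

namespace MotzkinAux
open MStep

lemma take_succ_eq {t : List MStep} {j : ℕ} (h : j < t.length) :
    t.take (j+1) = t.take j ++ [t.get ⟨j, h⟩] := by
  rw [← List.take_concat_get h, List.concat_eq_append]
  simp [List.get_eq_getElem]

lemma count_step {t : List MStep} {j : ℕ} (h : j < t.length) (s : MStep) :
    (t.take (j+1)).count s = (t.take j).count s + if t.get ⟨j, h⟩ = s then 1 else 0 := by
  rw [take_succ_eq h, List.count_append]
  simp only [List.count_cons, List.count_nil]
  rcases eq_or_ne (t.get ⟨j, h⟩) s with he | he <;> simp [he]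

lemma decomp {t : List MStep} (h : IsMotzkin (U :: t)) :
    ∃ w1 w2, t = w1 ++ D :: w2 ∧ IsMotzkin w1 ∧ IsMotzkin w2 := by
  obtain ⟨hb, hp⟩ := h
  have hbt : t.count D = t.count U + 1 := by
    simp [List.count_cons] at hb; omega
  have hex : ∃ i, (t.take i).count D = (t.take i).count U + 1 :=
    ⟨t.length, by simpa using hbt⟩
  classical
  obtain ⟨i, hi, hmin⟩ : ∃ i, ((t.take i).count D = (t.take i).count U + 1) ∧
      ∀ j < i, ¬ ((t.take j).count D = (t.take j).count U + 1) :=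
    ⟨Nat.find hex, Nat.find_spec hex, fun j hj => Nat.find_min hex hj⟩
  have hipos : 1 ≤ i := by
    rcases Nat.eq_zero_or_pos i with h0 | h0
    · rw [h0] at hi; simp at hi
    · exact h0
  have hilen : i ≤ t.length := by
    by_contra hc
    push_neg at hc
    exact hmin t.length hc (by simpa using hbt)
  have claimA : ∀ j < i, (t.take j).count D ≤ (t.take j).count U := by
    intro j hj
    induction j with
    | zero => simp
    | succ j ih =>
      have hj' : j < i := Nat.lt_of_succ_lt hj
      have hjl : j < t.length := lt_of_lt_of_le hj' hilen
      have hU := count_step hjl U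
      have hD := count_step hjl D
      have hne := hmin (j+1) hj
      have ihj := ih hj'
      cases hg : t.get ⟨j, hjl⟩ <;> rw [hg] at hU hD <;> simp at hU hD <;> omega
  have hjl : i - 1 < t.length := by omega
  have hstep : t.take i = t.take (i-1) ++ [t.get ⟨i-1, hjl⟩] := by
    have h2 := take_succ_eq hjl
    rwa [show i-1+1 = i by omega] at h2
  have hA := claimA (i-1) (by omega)
  have hUc := count_step hjl U
  have hDc := count_step hjl D
  rw [show i-1+1 = i by omega] at hUc hDc
  have hgD : t.get ⟨i-1, hjl⟩ = D := by
    cases hg : t.get ⟨i-1, hjl⟩ <;> rw [hg] at hUc hDc <;> simp at hUc hDc <;> omega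
  rw [hgD] at hUc hDc
  simp at hUc hDc
  have hbal : (t.take (i-1)).count D = (t.take (i-1)).count U := by omega
  have hd : t.drop (i-1) = D :: t.drop i := by
    rw [List.drop_eq_getElem_cons hjl, show i-1+1 = i by omega]
    have : t[i-1] = D := by simpa [List.get_eq_getElem] using hgD
    rw [this]
  have hteq : t = t.take (i-1) ++ D :: t.drop i := by
    conv_lhs => rw [← List.take_append_drop (i-1) t, hd]
  refine ⟨t.take (i-1), t.drop i, hteq, ⟨hbal.symm, ?_⟩, ⟨?_, ?_⟩⟩
  · intro p hpp
    have hpt : p <+: t := hpp.trans (List.take_prefix _ _)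
    have hlp : p.length ≤ i - 1 := by
      have h3 := hpp.length_le
      have : (t.take (i-1)).length = i - 1 := by
        rw [List.length_take]; omega
      omega
    have hpe : p = t.take p.length := List.prefix_iff_eq_take.mp hpt
    rcases Nat.lt_or_ge p.length (i-1) with hc | hc
    · rw [hpe]; exact claimA p.length (by omega)
    · have hpl : p.length = i - 1 := by omega
      rw [hpe, hpl, hbal]
  · -- balance of w2
    have hcount : ∀ s : MStep, t.count s = (t.take (i-1)).count s
        + (D :: t.drop i : List MStep).count s := by
      intro s; conv_lhs => rw [hteq]; rw [List.count_append]
    have h1 := hcount U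
    have h2 := hcount D
    simp [List.count_cons] at h1 h2
    omega
  · intro p hpp
    obtain ⟨r, hr⟩ := hpp
    have hpre : U :: (t.take (i-1) ++ D :: p) <+: U :: t := by
      refine ⟨r, ?_⟩
      conv_rhs => rw [hteq]
      rw [← hr]
      simp
    have := hp _ hpre
    simp only [List.count_cons, List.count_append] at this
    simp at this
    omega

lemma decomp_unique {w1 w2 w1' w2' : List MStep} (h1 : IsMotzkin w1) (h1' : IsMotzkin w1')
    (he : w1 ++ D :: w2 = w1' ++ D :: w2') : w1 = w1' ∧ w2 = w2' := by
  have hlen : w1.length = w1'.length := by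
    by_contra hne
    rcases Nat.lt_or_ge w1.length w1'.length with hc | hc
    · have hpre1 : w1 ++ [D] <+: w1 ++ D :: w2 := by
        refine ⟨w2, by simp⟩
      have hpre2 : w1' <+: w1 ++ D :: w2 := by
        rw [he]; exact List.prefix_append _ _
      have hsub : w1 ++ [D] <+: w1' :=
        List.prefix_of_prefix_length_le hpre1 hpre2 (by simp; omega)
      have := h1'.2 _ hsub
      have hb := h1.1
      simp [List.count_append, List.count_cons] at this
      omega
    · have hc' : w1'.length < w1.length := by omega
      have hpre1 : w1' ++ [D] <+: w1' ++ D :: w2' := ⟨w2', by simp⟩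
      have hpre2 : w1 <+: w1' ++ D :: w2' := by
        rw [← he]; exact List.prefix_append _ _
      have hsub : w1' ++ [D] <+: w1 :=
        List.prefix_of_prefix_length_le hpre1 hpre2 (by simp; omega)
      have := h1.2 _ hsub
      have hb := h1'.1
      simp [List.count_append, List.count_cons] at this
      omega
  obtain ⟨e1, e2⟩ := List.append_inj he hlen
  exact ⟨e1, by simpa using e2⟩

end MotzkinAux

namespace MotzkinAux
open MStep

def M : ℕ → Finset (List MStep)
  | 0 => {[]}
  | (n+1) => ((M n).image (fun w => H :: w)) ∪
      (Finset.range n).attach.biUnion (fun k =>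
        ((M k.1) ×ˢ (M (n-1-k.1))).image (fun p => U :: p.1 ++ D :: p.2))
  decreasing_by
  · exact Nat.lt_succ_self n
  · have := Finset.mem_range.mp k.2; omega
  · have := Finset.mem_range.mp k.2; omega

lemma mem_M : ∀ n w, w ∈ M n ↔ (w.length = n ∧ IsMotzkin w) := by
  intro n
  induction n using Nat.strong_induction_on with
  | _ n ih =>
    intro w
    match n with
    | 0 =>
      simp only [M, Finset.mem_singleton]
      constructor
      · rintro rfl; exact ⟨rfl, isMotzkin_nil⟩
      · rintro ⟨hl, -⟩; exact List.length_eq_zero_iff.mp hl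
    | (n+1) =>
      rw [M]
      simp only [Finset.mem_union, Finset.mem_image, Finset.mem_biUnion,
        Finset.mem_product, Finset.mem_attach, true_and, Subtype.exists,
        Finset.mem_range]
      constructor
      · rintro (⟨w', hw', rfl⟩ | ⟨k, hk, ⟨w1, w2⟩, ⟨hw1, hw2⟩, rfl⟩)
        · obtain ⟨hl, hm⟩ := (ih n (Nat.lt_succ_self n) w').mp hw'
          exact ⟨by simp [hl], isMotzkin_cons_H.mpr hm⟩
        · obtain ⟨hl1, hm1⟩ := (ih k (by omega) w1).mp hw1
          obtain ⟨hl2, hm2⟩ := (ih (n-1-k) (by omega) w2).mp hw2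
          refine ⟨?_, isMotzkin_UD hm1 hm2⟩
          simp [hl1, hl2]
          omega
      · rintro ⟨hl, hm⟩
        match w with
        | [] => simp at hl
        | (s :: t) =>
          cases s with
          | H =>
            left
            exact ⟨t, (ih n (Nat.lt_succ_self n) t).mpr
              ⟨by simpa using hl, isMotzkin_cons_H.mp hm⟩, rfl⟩
          | D => exact absurd hm not_isMotzkin_cons_D
          | U =>
            right
            obtain ⟨w1, w2, rfl, hm1, hm2⟩ := decomp hm
            have hlen : w1.length + w2.length + 2 = n + 1 := by
              simp at hl; omega
            refine ⟨w1.length, by omega, ⟨w1, w2⟩, ⟨?_, ?_⟩, by simp⟩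
            · exact (ih w1.length (by omega) w1).mpr ⟨rfl, hm1⟩
            · exact (ih (n-1-w1.length) (by omega) w2).mpr ⟨by omega, hm2⟩

lemma length_of_mem_M {n : ℕ} {w : List MStep} (h : w ∈ M n) : w.length = n :=
  ((mem_M n w).mp h).1

lemma isMotzkin_of_mem_M {n : ℕ} {w : List MStep} (h : w ∈ M n) : IsMotzkin w :=
  ((mem_M n w).mp h).2

end MotzkinAux

namespace MotzkinAux
open MStep

def aF (n : ℕ) : ℕ := ((M n).filter (fun w => Even (w.count U))).card
def bF (n : ℕ) : ℕ := ((M n).filter (fun w => Odd (w.count U))).card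

lemma evenMotzkin_eq (n : ℕ) : evenMotzkin n = aF n := by
  rw [evenMotzkin, aF]
  rw [Nat.card_congr (Equiv.subtypeEquivRight
    (q := fun w => w ∈ (M n).filter (fun w => Even (w.count MStep.U)))
    (fun w => by simp [mem_M, Finset.mem_filter]; tauto))]
  rw [Nat.card_eq_fintype_card, Fintype.card_coe]

lemma oddMotzkin_eq (n : ℕ) : oddMotzkin n = bF n := by
  rw [oddMotzkin, bF]
  rw [Nat.card_congr (Equiv.subtypeEquivRight
    (q := fun w => w ∈ (M n).filter (fun w => Odd (w.count MStep.U)))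
    (fun w => by simp [mem_M, Finset.mem_filter]; tauto))]
  rw [Nat.card_eq_fintype_card, Fintype.card_coe]

lemma count_UD (w1 w2 : List MStep) :
    (U :: w1 ++ D :: w2).count U = w1.count U + w2.count U + 1 := by
  simp [List.count_cons, List.count_append]

lemma injOn_f2 {k j : ℕ} : Set.InjOn (fun p : List MStep × List MStep => U :: p.1 ++ D :: p.2)
    ((M k ×ˢ M j : Finset (List MStep × List MStep)) : Set (List MStep × List MStep)) := by
  rintro ⟨w1, w2⟩ h1 ⟨w1', w2'⟩ h2 he
  simp only [Finset.coe_product, Set.mem_prod, Finset.mem_coe] at h1 h2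
  simp only [List.cons_append, List.cons.injEq, true_and] at he
  obtain ⟨e1, e2⟩ := decomp_unique (isMotzkin_of_mem_M h1.1) (isMotzkin_of_mem_M h2.1) he
  simp [e1, e2]

lemma card_filter_succ (n : ℕ) (P : ℕ → Prop) [DecidablePred P] :
    ((M (n+1)).filter (fun w => P (w.count U))).card
      = ((M n).filter (fun w => P (w.count U))).card
      + ∑ k ∈ Finset.range n,
          ((M k ×ˢ M (n-1-k)).filter
            (fun q : List MStep × List MStep => P (q.1.count U + q.2.count U + 1))).card := by
  rw [M]
  rw [Finset.filter_union]
  rw [Finset.card_union_of_disjoint]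
  · congr 1
    · -- H part
      rw [Finset.filter_image, Finset.card_image_of_injOn
        (Set.injOn_of_injective (fun x y h => by injection h))]
      congr 1
    · -- U part
      rw [Finset.filter_biUnion, Finset.card_biUnion]
      · rw [← Finset.sum_attach (Finset.range n) (fun k =>
          ((M k ×ˢ M (n-1-k)).filter
            (fun q : List MStep × List MStep => P (q.1.count U + q.2.count U + 1))).card)]
        apply Finset.sum_congr rfl
        intro k _
        rw [Finset.filter_image, Finset.card_image_of_injOn (injOn_f2.mono (by
          intro x hx
          exact (Finset.mem_coe.mp (Finset.mem_filter.mp hx).1)))]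
        congr 1
        apply Finset.filter_congr
        rintro ⟨w1, w2⟩ hw
        rw [count_UD]
      · -- pairwise disjoint
        rintro x - y - hxy
        apply Finset.disjoint_filter_filter
        rw [Finset.disjoint_left]
        rintro w hw hw'
        simp only [Finset.mem_image, Finset.mem_product] at hw hw'
        obtain ⟨⟨w1, w2⟩, ⟨hm1, hm2⟩, rfl⟩ := hw
        obtain ⟨⟨w1', w2'⟩, ⟨hm1', hm2'⟩, he⟩ := hw'
        simp only [List.cons_append, List.cons.injEq, true_and] at he
        obtain ⟨e1, -⟩ := decomp_unique (isMotzkin_of_mem_M hm1') (isMotzkin_of_mem_M hm1) he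
        apply hxy
        have l1 := length_of_mem_M hm1
        have l2 := length_of_mem_M hm1'
        rw [e1] at l2
        exact Subtype.ext (l1 ▸ l2 ▸ rfl)
  · -- H-image disjoint from U-images
    apply Finset.disjoint_filter_filter
    rw [Finset.disjoint_left]
    rintro w hw hw'
    simp only [Finset.mem_image] at hw
    obtain ⟨w', -, rfl⟩ := hw
    simp only [Finset.mem_biUnion, Finset.mem_image] at hw'
    obtain ⟨k, -, ⟨w1, w2⟩, -, he⟩ := hw'
    simp [List.cons_append] at he

lemma card_even_product (k j : ℕ) :
    ((M k ×ˢ M j).filter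
      (fun q : List MStep × List MStep => Even (q.1.count U + q.2.count U + 1))).card
    = aF k * bF j + bF k * aF j := by
  have hset : (M k ×ˢ M j).filter
      (fun q : List MStep × List MStep => Even (q.1.count U + q.2.count U + 1))
    = ((M k).filter (fun w => Even (w.count U)) ×ˢ (M j).filter (fun w => Odd (w.count U)))
      ∪ ((M k).filter (fun w => Odd (w.count U)) ×ˢ (M j).filter (fun w => Even (w.count U))) := by
    ext ⟨w1, w2⟩
    have hpar : (Even (w1.count U + w2.count U + 1)) ↔
        ((Even (w1.count U) ∧ Odd (w2.count U)) ∨ (Odd (w1.count U) ∧ Even (w2.count U))) := by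
      simp only [Nat.even_iff, Nat.odd_iff]
      omega
    simp only [Finset.mem_filter, Finset.mem_product, Finset.mem_union, hpar,
      ← Nat.not_even_iff_odd]
    tauto
  rw [hset, Finset.card_union_of_disjoint, Finset.card_product, Finset.card_product] <;>
    [rfl; skip]
  rw [Finset.disjoint_left]
  rintro ⟨w1, w2⟩ h1 h2
  simp only [Finset.mem_product, Finset.mem_filter, Nat.even_iff, Nat.odd_iff] at h1 h2
  omega

lemma card_odd_product (k j : ℕ) :
    ((M k ×ˢ M j).filter
      (fun q : List MStep × List MStep => Odd (q.1.count U + q.2.count U + 1))).card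
    = aF k * aF j + bF k * bF j := by
  have hset : (M k ×ˢ M j).filter
      (fun q : List MStep × List MStep => Odd (q.1.count U + q.2.count U + 1))
    = ((M k).filter (fun w => Even (w.count U)) ×ˢ (M j).filter (fun w => Even (w.count U)))
      ∪ ((M k).filter (fun w => Odd (w.count U)) ×ˢ (M j).filter (fun w => Odd (w.count U))) := by
    ext ⟨w1, w2⟩
    have hpar : (Even (w1.count U + w2.count U + 1)) ↔
        ((Even (w1.count U) ∧ Odd (w2.count U)) ∨ (Odd (w1.count U) ∧ Even (w2.count U))) := by
      simp only [Nat.even_iff, Nat.odd_iff]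
      omega
    simp only [Finset.mem_filter, Finset.mem_product, Finset.mem_union, hpar,
      ← Nat.not_even_iff_odd]
    tauto
  rw [hset, Finset.card_union_of_disjoint, Finset.card_product, Finset.card_product] <;>
    [rfl; skip]
  rw [Finset.disjoint_left]
  rintro ⟨w1, w2⟩ h1 h2
  simp only [Finset.mem_product, Finset.mem_filter, Nat.even_iff, Nat.odd_iff] at h1 h2
  omega

lemma aF_rec (n : ℕ) :
    aF (n+1) = aF n + 2 * ∑ k ∈ Finset.range n, aF k * bF (n-1-k) := by
  have h := card_filter_succ n Even
  rw [show ((M (n+1)).filter (fun w => Even (w.count U))).card = aF (n+1) from rfl,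
    show ((M n).filter (fun w => Even (w.count U))).card = aF n from rfl] at h
  rw [h]
  congr 1
  rw [Finset.sum_congr rfl (fun k _ => card_even_product k (n-1-k))]
  rw [Finset.sum_add_distrib, two_mul]
  congr 1
  rw [← Finset.sum_range_reflect (fun k => bF k * aF (n-1-k)) n]
  apply Finset.sum_congr rfl
  intro k hk
  have hk' := Finset.mem_range.mp hk
  rw [show n - 1 - (n-1-k) = k by omega, mul_comm]

lemma bF_rec (n : ℕ) :
    bF (n+1) = bF n + ∑ k ∈ Finset.range n, (aF k * aF (n-1-k) + bF k * bF (n-1-k)) := by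
  have h := card_filter_succ n Odd
  rw [show ((M (n+1)).filter (fun w => Odd (w.count U))).card = bF (n+1) from rfl,
    show ((M n).filter (fun w => Odd (w.count U))).card = bF n from rfl] at h
  rw [h]
  congr 1
  exact Finset.sum_congr rfl (fun k _ => card_odd_product k (n-1-k))

end MotzkinAux


theorem stmt_9 :
    evenMotzkin 0 = 1 ∧ oddMotzkin 0 = 0 ∧
    ∀ n : ℕ,
      evenMotzkin (n + 1) =
        evenMotzkin n + 2 * ∑ k ∈ Finset.range n, evenMotzkin k * oddMotzkin (n - 1 - k) ∧
      oddMotzkin (n + 1) =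
        oddMotzkin n + ∑ k ∈ Finset.range n,
          (evenMotzkin k * evenMotzkin (n - 1 - k) + oddMotzkin k * oddMotzkin (n - 1 - k)) := by
  refine ⟨?_, ?_, fun n => ⟨?_, ?_⟩⟩
  · rw [MotzkinAux.evenMotzkin_eq]
    simp [MotzkinAux.aF, MotzkinAux.M]
    rw [Finset.filter_singleton]
    simp
  · rw [MotzkinAux.oddMotzkin_eq]
    simp [MotzkinAux.bF, MotzkinAux.M]
  · simp only [MotzkinAux.evenMotzkin_eq, MotzkinAux.oddMotzkin_eq]
    exact MotzkinAux.aF_rec n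
  · simp only [MotzkinAux.evenMotzkin_eq, MotzkinAux.oddMotzkin_eq]
    exact MotzkinAux.bF_rec n
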